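/- Let Bₙ ∈ ℂ[x] be defined by B₀ = 1 and Bₙ₊₁ = x·Bₙ − Σ_{j=1}^{n+1} rⱼ·B_{n+1−j} for n ≥ 0 (the one-variable free Appell polynomials, i.e., the same recursion with sₖ replaced by rₖ). Then for every n ≥ 1, the divided difference of the c-free Appell polynomial Aₙ satisfies ΔAₙ(x, y) = Σ_{k=0}^{n−1} Bₖ(x)·A_{n−1−k}(y) as an identity of two-variable polynomials. -/
import Mathlib


open Polynomial

/-- The one-variable c-free Appell polynomials: `A₀ = 1` and
`Aₙ₊₁ = x·Aₙ − Σ_{j=1}^{n} rⱼ·A_{n+1−j} − s_{n+1}·1`. -/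
noncomputable def cfAppell (r s : ℕ → ℂ) : ℕ → Polynomial ℂ
  | 0 => 1
  | n + 1 =>
      X * cfAppell r s n
        - ∑ j ∈ Finset.range n, C (r (j + 1)) * cfAppell r s (n - j)
        - C (s (n + 1))
  termination_by n => n
  decreasing_by all_goals omega

/-- The one-variable free Appell polynomials: `B₀ = 1` and
`Bₙ₊₁ = x·Bₙ − Σ_{j=1}^{n+1} rⱼ·B_{n+1−j}`. -/
noncomputable def freeAppell (r : ℕ → ℂ) : ℕ → Polynomial ℂ
  | 0 => 1
  | n + 1 =>
      X * freeAppell r n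
        - ∑ j ∈ Finset.range (n + 1), C (r (j + 1)) * freeAppell r (n - j)
  termination_by n => n
  decreasing_by all_goals omega

section Aux

variable (r s : ℕ → ℂ)

local notation "R" => MvPolynomial (Fin 2) ℂ

noncomputable def cfa (v : MvPolynomial (Fin 2) ℂ) (n : ℕ) : MvPolynomial (Fin 2) ℂ :=
  Polynomial.aeval v (cfAppell r s n)

noncomputable def fab (v : MvPolynomial (Fin 2) ℂ) (n : ℕ) : MvPolynomial (Fin 2) ℂ :=
  Polynomial.aeval v (freeAppell r n)

lemma cfa_zero (v : R) : cfa r s v 0 = 1 := by simp [cfa, cfAppell]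

lemma fab_zero (v : R) : fab r v 0 = 1 := by simp [fab, freeAppell]

lemma cfa_succ (v : R) (n : ℕ) :
    cfa r s v (n + 1) = v * cfa r s v n
      - ∑ j ∈ Finset.range n, MvPolynomial.C (r (j + 1)) * cfa r s v (n - j)
      - MvPolynomial.C (s (n + 1)) := by
  rw [cfa, cfAppell]
  simp [map_sub, map_sum, cfa, Polynomial.aeval_C, MvPolynomial.algebraMap_eq]

lemma fab_succ (v : R) (n : ℕ) :
    fab r v (n + 1) = v * fab r v n
      - ∑ j ∈ Finset.range (n + 1), MvPolynomial.C (r (j + 1)) * fab r v (n - j) := by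
  rw [fab, freeAppell]
  simp [map_sub, map_sum, fab, Polynomial.aeval_C, MvPolynomial.algebraMap_eq]

noncomputable def Ssum (x y : R) (m : ℕ) : MvPolynomial (Fin 2) ℂ :=
  ∑ k ∈ Finset.range m, fab r x k * cfa r s y (m - 1 - k)

lemma Ssum_succ (x y : R) (m : ℕ) :
    Ssum r s x y (m + 1) = cfa r s y m + x * Ssum r s x y m
      - ∑ j ∈ Finset.range m, MvPolynomial.C (r (j + 1)) * Ssum r s x y (m - j) := by
  have h1 : Ssum r s x y (m + 1) = ∑ k ∈ Finset.range (m + 1), fab r x k * cfa r s y (m - k) := by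
    simp [Ssum]
  rw [h1, Finset.sum_range_succ']
  simp only [fab_zero, fab_succ, one_mul, Nat.sub_sub]
  -- now sum over k ∈ range m of (x * fab k - Σ_{j∈range(k+1)} C r (j+1) * fab (k-j)) * cfa (m-(k+1))
  have h2 : ∀ k ∈ Finset.range m,
      (x * fab r x k - ∑ j ∈ Finset.range (k + 1),
          MvPolynomial.C (r (j + 1)) * fab r x (k - j)) * cfa r s y (m - (k + 1))
      = x * (fab r x k * cfa r s y (m - 1 - k))
        - ∑ j ∈ Finset.range (k + 1),
            MvPolynomial.C (r (j + 1)) * (fab r x (k - j) * cfa r s y (m - (k + 1))) := by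
    intro k hk
    rw [sub_mul, Finset.sum_mul, Nat.sub_sub, Nat.add_comm 1 k, mul_assoc]
    congr 1
    apply Finset.sum_congr rfl
    intro j _
    ring
  rw [Finset.sum_congr rfl h2, Finset.sum_sub_distrib, ← Finset.mul_sum]
  have h3 : ∑ k ∈ Finset.range m, ∑ j ∈ Finset.range (k + 1),
      MvPolynomial.C (r (j + 1)) * (fab r x (k - j) * cfa r s y (m - (k + 1)))
      = ∑ j ∈ Finset.range m, MvPolynomial.C (r (j + 1)) * Ssum r s x y (m - j) := by
    have hsw := Finset.sum_Ico_Ico_comm 0 m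
      (fun j k => MvPolynomial.C (r (j + 1)) * (fab r x (k - j) * cfa r s y (m - (k + 1))))
    simp only [Nat.Ico_zero_eq_range] at hsw
    rw [← hsw]
    apply Finset.sum_congr rfl
    intro j hj
    rw [Finset.sum_Ico_eq_sum_range, Ssum, Finset.mul_sum]
    simp only [Finset.mem_range] at hj
    apply Finset.sum_congr rfl
    intro k hk
    simp only [Finset.mem_range] at hk
    have e1 : j + k - j = k := by omega
    have e2 : m - (j + k + 1) = m - j - 1 - k := by omega
    rw [e1, e2]
  rw [h3]
  have h4 : Ssum r s x y m = ∑ k ∈ Finset.range m, fab r x k * cfa r s y (m - 1 - k) := rfl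
  rw [← h4]
  simp only [Nat.sub_zero]
  ring


lemma key (x y : R) : ∀ n, (x - y) * Ssum r s x y n = cfa r s x n - cfa r s y n := by
  intro n
  induction n using Nat.strong_induction_on with
  | _ n ih =>
    match n with
    | 0 => simp [Ssum, cfa_zero]
    | m + 1 =>
      have hT : (x - y) * ∑ j ∈ Finset.range m, MvPolynomial.C (r (j + 1)) * Ssum r s x y (m - j)
          = ∑ j ∈ Finset.range m,
              MvPolynomial.C (r (j + 1)) * (cfa r s x (m - j) - cfa r s y (m - j)) := by
        rw [Finset.mul_sum]
        apply Finset.sum_congr rfl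
        intro j _
        rw [mul_left_comm, ih (m - j) (by omega)]
      have hm := ih m (by omega)
      rw [Ssum_succ, cfa_succ, cfa_succ, mul_sub, hT]
      simp only [mul_sub, Finset.sum_sub_distrib]
      linear_combination x * hm

end Aux

/-- for `n ≥ 1`, the divided difference of the c-free Appell polynomial
`Aₙ` satisfies `ΔAₙ(x, y) = Σ_{k=0}^{n−1} Bₖ(x)·A_{n−1−k}(y)`, where `ΔAₙ` is the unique
two-variable polynomial with `Aₙ(x) − Aₙ(y) = (x − y)·ΔAₙ(x, y)`. -/
theorem cfAppell_divided_difference (r s : ℕ → ℂ) (n : ℕ) (hn : 1 ≤ n)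
    (D : MvPolynomial (Fin 2) ℂ)
    (hD : (MvPolynomial.X 0 - MvPolynomial.X 1) * D =
      Polynomial.aeval (MvPolynomial.X 0) (cfAppell r s n)
        - Polynomial.aeval (MvPolynomial.X 1) (cfAppell r s n)) :
    D = ∑ k ∈ Finset.range n,
        Polynomial.aeval (MvPolynomial.X 0) (freeAppell r k) *
          Polynomial.aeval (MvPolynomial.X 1) (cfAppell r s (n - 1 - k)) := by
  have hk := key r s (MvPolynomial.X 0) (MvPolynomial.X 1) n
  have hne : (MvPolynomial.X 0 - MvPolynomial.X 1 : MvPolynomial (Fin 2) ℂ) ≠ 0 := by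
    intro h
    have h01 : (MvPolynomial.X 0 : MvPolynomial (Fin 2) ℂ) = MvPolynomial.X 1 :=
      sub_eq_zero.mp h
    have := MvPolynomial.X_injective h01
    exact absurd this (by decide)
  have : (MvPolynomial.X 0 - MvPolynomial.X 1) * D
      = (MvPolynomial.X 0 - MvPolynomial.X 1) * Ssum r s (MvPolynomial.X 0) (MvPolynomial.X 1) n := by
    rw [hD, hk]
    rfl
  have hDS := mul_left_cancel₀ hne this
  rw [hDS]
  rfl
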